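/- For every integer n ≥ 1 and every binary word y of length n−1, let N = {b_{y0}, b_{y1}} ∪ {a_x : x ∈ L_n, x a prefix of y0 or of y1} ∪ {c_z : z ∈ W_n}, and let P = {a_{y1}} ∪ {d_x : x ∈ L_n, x ≠ ∅}, where y0 and y1 denote y followed by the bit 0 or 1 respectively and ∅ is the empty word. If u and u′ are distinct vertices in N with dist(u, p) = dist(u′, p) for every p ∈ P, then both u and u′ lie in {a_x : x ∈ L_n} ∪ {c_{0⋯0}}, where 0⋯0 is the all-zeros word of length n. -/

import Mathlib

/-- `L n`: binary words of length at most `n` that are empty or end in `1` (`true`). -/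
abbrev Ln (n : ℕ) := {x : List Bool // x.length ≤ n ∧ (x = [] ∨ x.getLast? = some true)}

/-- `W n`: binary words of length exactly `n`. -/
abbrev Wn (n : ℕ) := {y : List Bool // y.length = n}

/-- Vertex set of the graph `G_n`: a copy of `L n` (the `a` vertices), two copies of `W n`
(the `b` and `c` vertices) and another copy of `L n` (the `d` vertices). -/
abbrev VGn (n : ℕ) := Ln n ⊕ Wn n ⊕ Wn n ⊕ Ln n

def va {n : ℕ} (x : Ln n) : VGn n := Sum.inl x
def vb {n : ℕ} (y : Wn n) : VGn n := Sum.inr (Sum.inl y)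
def vc {n : ℕ} (y : Wn n) : VGn n := Sum.inr (Sum.inr (Sum.inl y))
def vd {n : ℕ} (x : Ln n) : VGn n := Sum.inr (Sum.inr (Sum.inr x))

/-- The graph `G_n`: edges `b_y c_z` for all `y, z ∈ W n`, `a_x b_y` whenever `x` is a
prefix of `y`, and `d_x c_y` whenever `x` is a prefix of `y`. -/
def Gn (n : ℕ) : SimpleGraph (VGn n) where
  Adj u v :=
    match u, v with
    | Sum.inl x, Sum.inr (Sum.inl y) => x.1 <+: y.1
    | Sum.inr (Sum.inl y), Sum.inl x => x.1 <+: y.1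
    | Sum.inr (Sum.inl _), Sum.inr (Sum.inr (Sum.inl _)) => True
    | Sum.inr (Sum.inr (Sum.inl _)), Sum.inr (Sum.inl _) => True
    | Sum.inr (Sum.inr (Sum.inl y)), Sum.inr (Sum.inr (Sum.inr x)) => x.1 <+: y.1
    | Sum.inr (Sum.inr (Sum.inr x)), Sum.inr (Sum.inr (Sum.inl y)) => x.1 <+: y.1
    | _, _ => False
  symm := by
    constructor
    rintro (x | y | z | w) (x' | y' | z' | w') h <;> exact h
  loopless := by
    constructor
    rintro (x | y | z | w) h <;> exact h


section Aux
variable {n : ℕ}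

def col {n : ℕ} : VGn n → ZMod 2
  | Sum.inl _ => 0
  | Sum.inr (Sum.inl _) => 1
  | Sum.inr (Sum.inr (Sum.inl _)) => 0
  | Sum.inr (Sum.inr (Sum.inr _)) => 1

lemma adj_col {u v : VGn n} (h : (Gn n).Adj u v) : col v = col u + 1 := by
  rcases u with x | y | z | w <;> rcases v with x' | y' | z' | w' <;>
    simp_all [Gn, col] <;> decide

lemma adj_ab {x : Ln n} {w : Wn n} (h : x.1 <+: w.1) : (Gn n).Adj (va x) (vb w) := h
lemma adj_bc {w z : Wn n} : (Gn n).Adj (vb w) (vc z) := trivial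
lemma adj_cd {x : Ln n} {z : Wn n} (h : x.1 <+: z.1) : (Gn n).Adj (vc z) (vd x) := h

lemma walk_parity {u v : VGn n} (p : (Gn n).Walk u v) :
    (p.length : ZMod 2) = col u + col v := by
  induction p with
  | nil =>
    have : ∀ a : ZMod 2, (0 : ZMod 2) = a + a := by decide
    simpa using this _
  | cons h p ih =>
    have h2 : ∀ a b : ZMod 2, (a + 1) + b + 1 = a + b := by decide
    rw [SimpleGraph.Walk.length_cons]
    push_cast
    rw [ih, adj_col h, h2]

lemma dist_parity {u v : VGn n} (h : (Gn n).Reachable u v) :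
    ((Gn n).dist u v : ZMod 2) = col u + col v := by
  obtain ⟨p, hp⟩ := h.exists_walk_length_eq_dist
  rw [← hp]; exact walk_parity p

def extW (x : Ln n) : Wn n :=
  ⟨x.1 ++ List.replicate (n - x.1.length) false, by
    have := x.2.1; simp; omega⟩

lemma prefix_extW (x : Ln n) : x.1 <+: (extW x).1 := List.prefix_append _ _



lemma nat_two_of (d : ℕ) (h2 : d ≤ 2) (h0 : d ≠ 0) (hp : (d : ZMod 2) = 0) : d = 2 := by
  interval_cases d
  · exact absurd rfl h0
  · revert hp; decide
  · rfl

lemma nat_three_of (d : ℕ) (h3 : d ≤ 3) (h1 : d ≠ 1) (hp : (d : ZMod 2) = 1) : d = 3 := by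
  interval_cases d
  · revert hp; decide
  · exact absurd rfl h1
  · revert hp; decide
  · rfl

lemma dist_vb_vd (w : Wn n) (x : Ln n) : (Gn n).dist (vb w) (vd x) = 2 := by
  have p : (Gn n).Walk (vb w) (vd x) :=
    .cons (adj_bc (z := extW x)) (.cons (adj_cd (prefix_extW x)) .nil)
  have hle : (Gn n).dist (vb w) (vd x) ≤ 2 :=
    (Gn n).dist_le (.cons (adj_bc (z := extW x)) (.cons (adj_cd (prefix_extW x)) .nil))
  have hr : (Gn n).Reachable (vb w) (vd x) := ⟨p⟩
  have hpar := dist_parity hr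
  have hcol : col (vb w) + col (vd x) = (0 : ZMod 2) := by simp [col, vb, vd]; decide
  rw [hcol] at hpar
  refine nat_two_of _ hle ?_ hpar
  intro h0
  exact absurd (hr.dist_eq_zero_iff.mp h0) (by simp [vb, vd])

lemma dist_va_vd (x x' : Ln n) : (Gn n).dist (va x) (vd x') = 3 := by
  have p : (Gn n).Walk (va x) (vd x') :=
    .cons (adj_ab (prefix_extW x))
      (.cons (adj_bc (z := extW x')) (.cons (adj_cd (prefix_extW x')) .nil))
  have hle : (Gn n).dist (va x) (vd x') ≤ 3 :=
    (Gn n).dist_le (.cons (adj_ab (prefix_extW x))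
      (.cons (adj_bc (z := extW x')) (.cons (adj_cd (prefix_extW x')) .nil)))
  have hpar := dist_parity ⟨p⟩
  have hcol : col (va x) + col (vd x') = (1 : ZMod 2) := by simp [col, va, vd]
  rw [hcol] at hpar
  refine nat_three_of _ hle ?_ hpar
  intro h1
  exact absurd (SimpleGraph.dist_eq_one_iff_adj.mp h1) (by simp [Gn, va, vd])

lemma dist_vc_vd_of_prefix {z : Wn n} {x : Ln n} (h : x.1 <+: z.1) :
    (Gn n).dist (vc z) (vd x) = 1 :=
  SimpleGraph.dist_eq_one_iff_adj.mpr (adj_cd h)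

lemma dist_vc_vd_of_not {z : Wn n} {x : Ln n} (h : ¬ x.1 <+: z.1) :
    (Gn n).dist (vc z) (vd x) = 3 := by
  have p : (Gn n).Walk (vc z) (vd x) :=
    .cons ((Gn n).adj_symm (adj_bc (w := extW x)))
      (.cons (adj_bc (z := extW x)) (.cons (adj_cd (prefix_extW x)) .nil))
  have hle : (Gn n).dist (vc z) (vd x) ≤ 3 :=
    (Gn n).dist_le (.cons ((Gn n).adj_symm (adj_bc (w := extW x)))
      (.cons (adj_bc (z := extW x)) (.cons (adj_cd (prefix_extW x)) .nil)))
  have hpar := dist_parity ⟨p⟩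
  have hcol : col (vc z) + col (vd x) = (1 : ZMod 2) := by simp [col, vc, vd]
  rw [hcol] at hpar
  refine nat_three_of _ hle ?_ hpar
  intro h1
  exact h (SimpleGraph.dist_eq_one_iff_adj.mp h1)

lemma dist_vb_va_of_prefix {w : Wn n} {x : Ln n} (h : x.1 <+: w.1) :
    (Gn n).dist (vb w) (va x) = 1 :=
  SimpleGraph.dist_eq_one_iff_adj.mpr ((Gn n).adj_symm (adj_ab h))

lemma dist_vb_va_of_not {w : Wn n} {x : Ln n} (h : ¬ x.1 <+: w.1) :
    (Gn n).dist (vb w) (va x) = 3 := by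
  have p : (Gn n).Walk (vb w) (va x) :=
    .cons (adj_bc (z := extW x))
      (.cons ((Gn n).adj_symm adj_bc) (.cons ((Gn n).adj_symm (adj_ab (prefix_extW x))) .nil))
  have hle : (Gn n).dist (vb w) (va x) ≤ 3 :=
    (Gn n).dist_le (.cons (adj_bc (z := extW x))
      (.cons ((Gn n).adj_symm adj_bc) (.cons ((Gn n).adj_symm (adj_ab (prefix_extW x))) .nil)))
  have hpar := dist_parity ⟨p⟩
  have hcol : col (vb w) + col (va x) = (1 : ZMod 2) := by simp [col, vb, va]
  rw [hcol] at hpar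
  refine nat_three_of _ hle ?_ hpar
  intro h1
  exact h (SimpleGraph.dist_eq_one_iff_adj.mp h1)

lemma dist_vc_va (z : Wn n) (x : Ln n) : (Gn n).dist (vc z) (va x) = 2 := by
  have p : (Gn n).Walk (vc z) (va x) :=
    .cons ((Gn n).adj_symm (adj_bc (w := extW x)))
      (.cons ((Gn n).adj_symm (adj_ab (prefix_extW x))) .nil)
  have hle : (Gn n).dist (vc z) (va x) ≤ 2 :=
    (Gn n).dist_le (.cons ((Gn n).adj_symm (adj_bc (w := extW x)))
      (.cons ((Gn n).adj_symm (adj_ab (prefix_extW x))) .nil))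
  have hr : (Gn n).Reachable (vc z) (va x) := ⟨p⟩
  have hpar := dist_parity hr
  have hcol : col (vc z) + col (va x) = (0 : ZMod 2) := by simp [col, vc, va]
  rw [hcol] at hpar
  refine nat_two_of _ hle ?_ hpar
  intro h0
  exact absurd (hr.dist_eq_zero_iff.mp h0) (by simp [vc, va])

end Aux

lemma exists_true_prefix (z : List Bool) (h : z ≠ List.replicate z.length false) :
    ∃ w : List Bool, w ++ [true] <+: z := by
  induction z with
  | nil => simp at h
  | cons a zs ih =>
    cases a with
    | true => exact ⟨[], ⟨zs, rfl⟩⟩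
    | false =>
      have : zs ≠ List.replicate zs.length false := by
        intro hz; exact h (by rw [List.length_cons, List.replicate_succ, ← hz])
      obtain ⟨w, hw⟩ := ih this
      exact ⟨false :: w, by simpa [List.cons_prefix_cons] using hw⟩

lemma exists_sep (z z' : List Bool) (hlen : z.length = z'.length) (hne : z ≠ z') :
    ∃ w : List Bool, (w ++ [true] <+: z ∧ ¬ w ++ [true] <+: z') ∨
      (w ++ [true] <+: z' ∧ ¬ w ++ [true] <+: z) := by
  induction z generalizing z' with
  | nil => cases z' <;> simp_all
  | cons a zs ih =>
    cases z' with
    | nil => simp at hlen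
    | cons a' zs' =>
      by_cases ha : a = a'
      · subst ha
        have hne' : zs ≠ zs' := by intro h; exact hne (by rw [h])
        obtain ⟨w, hw⟩ := ih zs' (by simpa using hlen) hne'
        refine ⟨a :: w, ?_⟩
        rcases hw with ⟨h1, h2⟩ | ⟨h1, h2⟩
        · exact Or.inl ⟨by simpa [List.cons_prefix_cons] using h1,
            by simpa [List.cons_prefix_cons] using h2⟩
        · exact Or.inr ⟨by simpa [List.cons_prefix_cons] using h1,
            by simpa [List.cons_prefix_cons] using h2⟩
      · cases a with
        | true =>
          refine ⟨[], Or.inl ⟨⟨zs, rfl⟩, ?_⟩⟩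
          simp [List.cons_prefix_cons]
          cases a' with
          | false => rfl
          | true => exact absurd rfl ha
        | false =>
          have ha' : a' = true := by
            cases a' with
            | true => rfl
            | false => exact absurd rfl ha
          subst ha'
          refine ⟨[], Or.inr ⟨⟨zs', rfl⟩, ?_⟩⟩
          simp [List.cons_prefix_cons]

lemma aux_main (n : ℕ) (hn : 1 ≤ n) (y : List Bool) (hy : y.length = n - 1)
    (u u' : VGn n) (hne : u ≠ u')
    (hu : (∃ w : Wn n, (w.1 = y ++ [false] ∨ w.1 = y ++ [true]) ∧ u = vb w) ∨
          (∃ x : Ln n, (x.1 <+: y ++ [false] ∨ x.1 <+: y ++ [true]) ∧ u = va x) ∨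
          (∃ z : Wn n, u = vc z))
    (hu' : (∃ w : Wn n, (w.1 = y ++ [false] ∨ w.1 = y ++ [true]) ∧ u' = vb w) ∨
           (∃ x : Ln n, (x.1 <+: y ++ [false] ∨ x.1 <+: y ++ [true]) ∧ u' = va x) ∨
           (∃ z : Wn n, u' = vc z))
    (heq : ∀ p : VGn n,
      ((∃ x : Ln n, x.1 = y ++ [true] ∧ p = va x) ∨
       (∃ x : Ln n, x.1 ≠ [] ∧ p = vd x)) →
      (Gn n).dist u p = (Gn n).dist u' p) :
    (∃ x : Ln n, u = va x) ∨ u = vc ⟨List.replicate n false, by simp⟩ := by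
  have hyl : (y ++ [true]).length = n := by simp [hy]; omega
  have y1L : Ln n := ⟨y ++ [true], hyl.le, Or.inr List.getLast?_concat⟩
  have heqp1 : (Gn n).dist u (va (⟨y ++ [true], hyl.le, Or.inr List.getLast?_concat⟩ : Ln n)) =
      (Gn n).dist u' (va ⟨y ++ [true], hyl.le, Or.inr List.getLast?_concat⟩) :=
    heq _ (Or.inl ⟨_, rfl, rfl⟩)
  have heqd : ∀ xo : Ln n, xo.1 ≠ [] →
      (Gn n).dist u (vd xo) = (Gn n).dist u' (vd xo) :=
    fun xo h => heq _ (Or.inr ⟨xo, h, rfl⟩)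
  have not01 : ¬ ((y ++ [true]) <+: y ++ [false]) := by
    intro h
    have h2 := h.eq_of_length (by simp)
    simp at h2
  have d0 : Ln n := ⟨[true], hn, Or.inr (by simp)⟩
  rcases hu with ⟨w, hw, rfl⟩ | ⟨x, hx, rfl⟩ | ⟨z, rfl⟩
  · -- u = vb w : impossible
    exfalso
    have e := heqd ⟨[true], hn, Or.inr (by simp)⟩ (by simp)
    rw [dist_vb_vd] at e
    rcases hu' with ⟨w', hw', rfl⟩ | ⟨x', hx', rfl⟩ | ⟨z', rfl⟩
    · have hww : w ≠ w' := fun h => hne (by rw [h])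
      rcases hw with hw | hw <;> rcases hw' with hw' | hw'
      · exact hww (Subtype.ext (hw.trans hw'.symm))
      · rw [dist_vb_va_of_not (by rw [hw]; exact not01),
          dist_vb_va_of_prefix (by rw [hw'])] at heqp1
        exact absurd heqp1 (by decide)
      · rw [dist_vb_va_of_prefix (by rw [hw]),
          dist_vb_va_of_not (by rw [hw']; exact not01)] at heqp1
        exact absurd heqp1 (by decide)
      · exact hww (Subtype.ext (hw.trans hw'.symm))
    · rw [dist_va_vd] at e
      exact absurd e (by decide)
    · by_cases hp : ([true] : List Bool) <+: z'.1
      · rw [dist_vc_vd_of_prefix hp] at e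
        exact absurd e (by decide)
      · rw [dist_vc_vd_of_not hp] at e
        exact absurd e (by decide)
  · exact Or.inl ⟨x, rfl⟩
  · by_cases hz0 : z.1 = List.replicate n false
    · exact Or.inr (congrArg vc (Subtype.ext hz0))
    · exfalso
      have hz' : z.1 ≠ List.replicate z.1.length false := by rw [z.2]; exact hz0
      obtain ⟨w0, hw0⟩ := exists_true_prefix z.1 hz'
      have hlen0 : (w0 ++ [true]).length ≤ n := le_of_le_of_eq hw0.length_le z.2
      have e := heqd ⟨w0 ++ [true], hlen0, Or.inr List.getLast?_concat⟩ (by simp)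
      rw [dist_vc_vd_of_prefix hw0] at e
      rcases hu' with ⟨w', hw', rfl⟩ | ⟨x', hx', rfl⟩ | ⟨z', rfl⟩
      · rw [dist_vb_vd] at e
        exact absurd e (by decide)
      · rw [dist_va_vd] at e
        exact absurd e (by decide)
      · have hzz : z.1 ≠ z'.1 := fun h => hne (congrArg vc (Subtype.ext h))
        obtain ⟨w1, hsep⟩ := exists_sep z.1 z'.1 (z.2.trans z'.2.symm) hzz
        rcases hsep with ⟨h1, h2⟩ | ⟨h1, h2⟩
        · have e2 := heqd ⟨w1 ++ [true], le_of_le_of_eq h1.length_le z.2,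
            Or.inr List.getLast?_concat⟩ (by simp)
          rw [dist_vc_vd_of_prefix h1, dist_vc_vd_of_not h2] at e2
          exact absurd e2 (by decide)
        · have e2 := heqd ⟨w1 ++ [true], le_of_le_of_eq h1.length_le z'.2,
            Or.inr List.getLast?_concat⟩ (by simp)
          rw [dist_vc_vd_of_not h2, dist_vc_vd_of_prefix h1] at e2
          exact absurd e2 (by decide)

/-- For `n ≥ 1` and a word `y` of length `n - 1`, let
`N = {b_{y0}, b_{y1}} ∪ {a_x : x a prefix of y0 or of y1} ∪ {c_z : z ∈ W_n}` and
`P = {a_{y1}} ∪ {d_x : x ≠ ∅}`. If distinct `u, u' ∈ N` have equal distances to every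
vertex of `P`, then both lie in `{a_x : x ∈ L_n} ∪ {c_{0⋯0}}`. -/
theorem stmt15 (n : ℕ) (hn : 1 ≤ n) (y : List Bool) (hy : y.length = n - 1)
    (u u' : VGn n) (hne : u ≠ u')
    (hu : (∃ w : Wn n, (w.1 = y ++ [false] ∨ w.1 = y ++ [true]) ∧ u = vb w) ∨
          (∃ x : Ln n, (x.1 <+: y ++ [false] ∨ x.1 <+: y ++ [true]) ∧ u = va x) ∨
          (∃ z : Wn n, u = vc z))
    (hu' : (∃ w : Wn n, (w.1 = y ++ [false] ∨ w.1 = y ++ [true]) ∧ u' = vb w) ∨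
           (∃ x : Ln n, (x.1 <+: y ++ [false] ∨ x.1 <+: y ++ [true]) ∧ u' = va x) ∨
           (∃ z : Wn n, u' = vc z))
    (heq : ∀ p : VGn n,
      ((∃ x : Ln n, x.1 = y ++ [true] ∧ p = va x) ∨
       (∃ x : Ln n, x.1 ≠ [] ∧ p = vd x)) →
      (Gn n).dist u p = (Gn n).dist u' p) :
    ((∃ x : Ln n, u = va x) ∨ u = vc ⟨List.replicate n false, by simp⟩) ∧
    ((∃ x : Ln n, u' = va x) ∨ u' = vc ⟨List.replicate n false, by simp⟩) := by
  exact ⟨aux_main n hn y hy u u' hne hu hu' heq,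
    aux_main n hn y hy u' u hne.symm hu' hu (fun p hp => (heq p hp).symm)⟩
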